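/- Let k > 2 + √5. Then there exists r > 0 such that for all x ∈ (0, r), k·((k−1)/(k+1))·x + sinh(x + ((k−1)/(k+1))·x) − k·sinh x < 0; consequently, any y ≥ 0 with k·y + sinh(x + y) = k·sinh x satisfies y > ((k − 1)/(k + 1))·x. Hence for interface strength δ = 2(k−1)/(k+1) > √5 − 1, the estimate y ≤ (δ/2)·x fails for all sufficiently small x > 0. -/

import Mathlib

open Real

lemma sinh_bound_aux (t : ℝ) (ht0 : 0 ≤ t) (ht1 : t ≤ 1) :
    |Real.sinh t - (t + t ^ 3 / 6)| ≤ t ^ 5 / 100 := by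
  have habs : |t| ≤ 1 := by rwa [abs_of_nonneg ht0]
  have habs' : |(-t)| ≤ 1 := by rwa [abs_neg]
  have h1 := Real.exp_bound habs (n := 5) (by norm_num)
  have h2 := Real.exp_bound habs' (n := 5) (by norm_num)
  have hsum1 : ∑ m ∈ Finset.range 5, t ^ m / m.factorial
      = 1 + t + t ^ 2 / 2 + t ^ 3 / 6 + t ^ 4 / 24 := by
    simp [Finset.sum_range_succ, Nat.factorial]
  have hsum2 : ∑ m ∈ Finset.range 5, (-t) ^ m / m.factorial
      = 1 - t + t ^ 2 / 2 - t ^ 3 / 6 + t ^ 4 / 24 := by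
    simp [Finset.sum_range_succ, Nat.factorial]
    ring
  rw [hsum1, abs_of_nonneg ht0] at h1
  rw [hsum2, abs_neg, abs_of_nonneg ht0] at h2
  have hc : ((5:ℕ).succ : ℝ) / ((5:ℕ).factorial * (5:ℕ)) = 1/100 := by
    norm_num [Nat.factorial]
  rw [hc] at h1 h2
  have hsinh : Real.sinh t = (Real.exp t - Real.exp (-t)) / 2 := Real.sinh_eq t
  have key : Real.sinh t - (t + t ^ 3 / 6)
      = ((Real.exp t - (1 + t + t ^ 2 / 2 + t ^ 3 / 6 + t ^ 4 / 24))
        - (Real.exp (-t) - (1 - t + t ^ 2 / 2 - t ^ 3 / 6 + t ^ 4 / 24))) / 2 := by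
    rw [hsinh]; ring
  rw [key]
  have := abs_sub (Real.exp t - (1 + t + t ^ 2 / 2 + t ^ 3 / 6 + t ^ 4 / 24))
      (Real.exp (-t) - (1 - t + t ^ 2 / 2 - t ^ 3 / 6 + t ^ 4 / 24))
  rw [abs_div]
  have h2' : |(2:ℝ)| = 2 := by norm_num
  rw [h2']
  calc |(Real.exp t - (1 + t + t ^ 2 / 2 + t ^ 3 / 6 + t ^ 4 / 24))
        - (Real.exp (-t) - (1 - t + t ^ 2 / 2 - t ^ 3 / 6 + t ^ 4 / 24))| / 2
      ≤ (t ^ 5 * (1/100) + t ^ 5 * (1/100)) / 2 := by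
        have h := abs_sub (Real.exp t - (1 + t + t ^ 2 / 2 + t ^ 3 / 6 + t ^ 4 / 24))
          (Real.exp (-t) - (1 - t + t ^ 2 / 2 - t ^ 3 / 6 + t ^ 4 / 24))
        linarith [abs_sub (Real.exp t - (1 + t + t ^ 2 / 2 + t ^ 3 / 6 + t ^ 4 / 24))
          (Real.exp (-t) - (1 - t + t ^ 2 / 2 - t ^ 3 / 6 + t ^ 4 / 24))]
    _ = t ^ 5 / 100 := by ring

/-- Sharpness of the bound δ ≤ √5 − 1 in Lemma `lem:bestC0`: for k > 2 + √5 the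
estimate y ≤ ((k−1)/(k+1))·x = (δ/2)·x fails for all sufficiently small x > 0. -/
theorem statement17 (k : ℝ) (hk : 2 + Real.sqrt 5 < k) :
    ∃ r > (0 : ℝ), ∀ x ∈ Set.Ioo (0 : ℝ) r,
      (k * ((k - 1) / (k + 1) * x) + Real.sinh (x + (k - 1) / (k + 1) * x)
          - k * Real.sinh x < 0) ∧
      ∀ y ≥ (0 : ℝ), k * y + Real.sinh (x + y) = k * Real.sinh x →
        (k - 1) / (k + 1) * x < y := by
  have hs5 : Real.sqrt 5 ^ 2 = 5 := Real.sq_sqrt (by norm_num)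
  have hs5' : (2:ℝ) < Real.sqrt 5 := by
    nlinarith [Real.sqrt_nonneg 5]
  have hk4 : (4:ℝ) < k := by linarith
  have hkp : (0:ℝ) < k + 1 := by linarith
  set c : ℝ := (k - 1) / (k + 1) with hc
  have hc_eq : c * (k + 1) = k - 1 := by
    rw [hc]; exact div_mul_cancel₀ _ (ne_of_gt hkp)
  have hc0 : 0 < c := div_pos (by linarith) hkp
  have hc1 : c < 1 := by
    rw [hc, div_lt_one hkp]; linarith
  -- the key cubic inequality : (1+c)^3 < k
  have hquad : 5 < (k - 2) ^ 2 := by nlinarith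
  have hcube : (1 + c) ^ 3 < k := by
    have h8 : 8 * k ^ 2 < (k + 1) ^ 3 := by nlinarith
    have h1c : 1 + c = 2 * k / (k + 1) := by
      rw [hc]; field_simp; ring
    rw [h1c, div_pow, div_lt_iff₀ (by positivity)]
    nlinarith [pow_pos hkp 3]
  set A : ℝ := (k - (1 + c) ^ 3) / 6 with hA
  set B : ℝ := ((1 + c) ^ 5 + k) / 100 with hB
  have hA0 : 0 < A := by rw [hA]; linarith
  have hB0 : 0 < B := by rw [hB]; positivity
  refine ⟨min (1/2) (A / B), lt_min (by norm_num) (div_pos hA0 hB0), ?_⟩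
  rintro x ⟨hx0, hxr⟩
  have hx12 : x < 1/2 := lt_of_lt_of_le hxr (min_le_left _ _)
  have hxAB : x < A / B := lt_of_lt_of_le hxr (min_le_right _ _)
  have hx1 : x ≤ 1 := by linarith
  have hBx : B * x ^ 2 < A := by
    have : x ^ 2 < A / B := by nlinarith [div_pos hA0 hB0]
    calc B * x ^ 2 < B * (A / B) := by
          exact (mul_lt_mul_iff_right₀ hB0).mpr this
      _ = A := by field_simp
  have ht1 : (1 + c) * x ≤ 1 := by nlinarith
  have ht0 : 0 ≤ (1 + c) * x := by positivity
  have hb1 := sinh_bound_aux ((1 + c) * x) ht0 ht1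
  have hb2 := sinh_bound_aux x (le_of_lt hx0) hx1
  rw [abs_le] at hb1 hb2
  have hxcx : x + c * x = (1 + c) * x := by ring
  have hmain : k * (c * x) + Real.sinh (x + c * x) - k * Real.sinh x < 0 := by
    rw [hxcx]
    have h1 : Real.sinh ((1 + c) * x) ≤ (1 + c) * x + ((1 + c) * x) ^ 3 / 6
        + ((1 + c) * x) ^ 5 / 100 := by linarith [hb1.2]
    have h2 : x + x ^ 3 / 6 - x ^ 5 / 100 ≤ Real.sinh x := by linarith [hb2.1]
    have hcanc : k * (c * x) + (1 + c) * x - k * x = 0 := by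
      rw [hc]; field_simp; ring
    have hpow3 : ((1 + c) * x) ^ 3 = (1 + c) ^ 3 * x ^ 3 := by ring
    have hpow5 : ((1 + c) * x) ^ 5 = (1 + c) ^ 5 * x ^ 5 := by ring
    rw [hpow3, hpow5] at h1
    have h2' : k * (x + x ^ 3 / 6 - x ^ 5 / 100) ≤ k * Real.sinh x :=
      mul_le_mul_of_nonneg_left h2 (by linarith)
    have hAB : -A * x ^ 3 + B * x ^ 5
        = -(k * x ^ 3) / 6 + (1 + c) ^ 3 * x ^ 3 / 6
          + (1 + c) ^ 5 * x ^ 5 / 100 + k * x ^ 5 / 100 := by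
      rw [hA, hB]; ring
    have hup : k * (c * x) + Real.sinh ((1 + c) * x) - k * Real.sinh x
        ≤ -A * x ^ 3 + B * x ^ 5 := by
      rw [hAB]; linarith [h1, h2', hcanc]
    have hx3 : (0:ℝ) < x ^ 3 := by positivity
    have hfin : B * x ^ 2 * x ^ 3 < A * x ^ 3 := by
      exact mul_lt_mul_of_pos_right hBx hx3
    have hfin2 : B * x ^ 2 * x ^ 3 = B * x ^ 5 := by ring
    linarith [hup, hfin, hfin2.symm.le, hfin2.le]
  refine ⟨hmain, ?_⟩
  intro y hy heq
  by_contra hcon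
  push_neg at hcon
  have hmono : k * y + Real.sinh (x + y) ≤ k * (c * x) + Real.sinh (x + c * x) := by
    have h1 : k * y ≤ k * (c * x) := by
      apply mul_le_mul_of_nonneg_left hcon (by linarith)
    have h2 : Real.sinh (x + y) ≤ Real.sinh (x + c * x) := by
      apply Real.sinh_le_sinh.mpr; linarith
    linarith
  linarith [heq, hmono, hmain]
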